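/- For every nonnegative integer n, the nth Bessel polynomial y_n(x) = Σ_{k=0}^{n} ((n+k)!/(2^k · k! · (n-k)!)) x^k satisfies the differential equation x² y_n'' + (2x+2) y_n' = n(n+1) y_n. -/
import Mathlib

open Polynomial

/-- The `n`th Bessel polynomial `y_n(x) = Σ_{k=0}^n ((n+k)!/(2^k k! (n-k)!)) x^k`. -/
noncomputable def besselPoly (n : ℕ) : Polynomial ℚ :=
  ∑ k ∈ Finset.range (n + 1),
    C ((Nat.factorial (n + k) : ℚ) / (2 ^ k * Nat.factorial k * Nat.factorial (n - k))) * X ^ k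

noncomputable def besselCoef (n k : ℕ) : ℚ :=
  (Nat.factorial (n + k) : ℚ) / (2 ^ k * Nat.factorial k * Nat.factorial (n - k))

lemma besselPoly_eq (n : ℕ) :
    besselPoly n = ∑ k ∈ Finset.range (n + 1), C (besselCoef n k) * X ^ k := rfl

lemma term_eq (c : ℚ) (k : ℕ) :
    X ^ 2 * derivative (derivative (C c * X ^ k)) + (2 * X + 2) * derivative (C c * X ^ k)
    = C (c * k * (k + 1)) * X ^ k + C (2 * c * k) * X ^ (k - 1) := by
  match k with
  | 0 => simp
  | 1 => simp [derivative_C_mul_X_pow, C_mul, C_add, map_ofNat]; ring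
  | (k + 2) =>
    simp only [derivative_C_mul_X_pow, Nat.add_sub_cancel]
    push_cast
    simp only [C_mul, C_add, C_1, C_eq_natCast, map_ofNat]
    ring

lemma key (n k : ℕ) (h : k < n) :
    (k : ℚ) * (k + 1) * besselCoef n k + 2 * (k + 1) * besselCoef n (k + 1)
    = (n : ℚ) * (n + 1) * besselCoef n k := by
  unfold besselCoef
  have h1 : n + (k + 1) = (n + k) + 1 := by omega
  have h2 : n - k = (n - (k + 1)) + 1 := by omega
  rw [h1, h2, Nat.factorial_succ, Nat.factorial_succ, Nat.factorial_succ]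
  have hcast : ((n - (k + 1) : ℕ) : ℚ) = (n : ℚ) - k - 1 := by
    have : ((n - (k+1) : ℕ) : ℚ) = (n : ℚ) - ((k+1 : ℕ) : ℚ) :=
      Nat.cast_sub (show k + 1 ≤ n by omega)
    push_cast at this ⊢; linarith
  have hk : ((k : ℚ) + 1) ≠ 0 := by positivity
  have hnk : ((n + k : ℕ) : ℚ) + 1 ≠ 0 := by positivity
  have hf1 : (Nat.factorial (n + k) : ℚ) ≠ 0 := by exact_mod_cast (Nat.factorial_pos _).ne'
  have hf2 : (Nat.factorial k : ℚ) ≠ 0 := by exact_mod_cast (Nat.factorial_pos _).ne'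
  have hf3 : (Nat.factorial (n - (k+1)) : ℚ) ≠ 0 := by exact_mod_cast (Nat.factorial_pos _).ne'
  have h2pow : (2 : ℚ) ^ k ≠ 0 := by positivity
  have hsub : (n : ℚ) - k ≠ 0 := by
    have : (k : ℚ) < n := by exact_mod_cast h
    intro hc; linarith
  push_cast
  rw [hcast]
  have hsub' : (n : ℚ) - ↑k - 1 + 1 ≠ 0 := by
    intro hc; apply hsub; linarith
  field_simp
  ring

theorem stmt_3 (n : ℕ) :
    X ^ 2 * derivative (derivative (besselPoly n)) +
      (2 * X + 2) * derivative (besselPoly n) =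
    C ((n : ℚ) * (n + 1)) * besselPoly n := by
  rw [besselPoly_eq, derivative_sum]
  simp only [derivative_sum]
  rw [Finset.mul_sum, Finset.mul_sum, ← Finset.sum_add_distrib, Finset.mul_sum]
  have hterm : ∀ k ∈ Finset.range (n + 1),
      X ^ 2 * derivative (derivative (C (besselCoef n k) * X ^ k))
        + (2 * X + 2) * derivative (C (besselCoef n k) * X ^ k)
      = C (besselCoef n k * k * (k + 1)) * X ^ k
        + C (2 * besselCoef n k * k) * X ^ (k - 1) := fun k _ => term_eq _ k
  rw [Finset.sum_congr rfl hterm, Finset.sum_add_distrib]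
  rw [Finset.sum_range_succ' (fun k => C (2 * besselCoef n k * k) * X ^ (k - 1))]
  simp only [Nat.cast_zero, mul_zero, map_zero, zero_mul, add_zero, Nat.add_sub_cancel]
  rw [Finset.sum_range_succ (fun k => C (besselCoef n k * k * (k + 1)) * X ^ k),
      Finset.sum_range_succ (fun k => C ((n : ℚ) * (n + 1)) * (C (besselCoef n k) * X ^ k))]
  have hlast : C (besselCoef n n * n * (n + 1)) * X ^ n
      = C ((n : ℚ) * (n + 1)) * (C (besselCoef n n) * X ^ n) := by
    rw [← mul_assoc, ← C_mul]; ring_nf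
  rw [hlast]
  have hmain : ∑ k ∈ Finset.range n, C (besselCoef n k * k * (k + 1)) * X ^ k
      + ∑ k ∈ Finset.range n, C (2 * besselCoef n (k + 1) * (k + 1 : ℕ)) * X ^ k
      = ∑ k ∈ Finset.range n, C ((n : ℚ) * (n + 1)) * (C (besselCoef n k) * X ^ k) := by
    rw [← Finset.sum_add_distrib]
    refine Finset.sum_congr rfl fun k hk => ?_
    have hk' : k < n := Finset.mem_range.mp hk
    have hco : besselCoef n k * (k:ℚ) * ((k:ℚ) + 1) + 2 * besselCoef n (k + 1) * ((k + 1 : ℕ) : ℚ)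
        = (n:ℚ) * ((n:ℚ) + 1) * besselCoef n k := by
      have := key n k hk'
      push_cast
      linarith
    rw [← add_mul, ← C_add, hco, C_mul, mul_assoc]
  push_cast at hmain ⊢
  rw [← hmain]
  ring
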